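/- Let G_Φ be the Cauchy transform of the semicircle law, G_Φ(z) = (z − √(z²−4))/2 for Im z > 0, with the branch of the square root satisfying √(z²−4) ∼ z as z → ∞. Then: (1) |G_Φ(z)| ≤ 1 for all z with Im z > 0; and (2) |z − 2·G_Φ(z)| ≥ 2√(Im z) for all z with 0 < Im z < 2. -/

import Mathlib

open MeasureTheory Complex Set

/-- The Cauchy transform of a measure on ℝ: `G_μ(z) = ∫ dμ(t)/(z−t)`. -/
noncomputable def cauchyT (μ : Measure ℝ) (z : ℂ) : ℂ := ∫ t : ℝ, (z - (t : ℂ))⁻¹ ∂μ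

/-- The cumulative distribution function of a measure on ℝ. -/
noncomputable def cdfOf (μ : Measure ℝ) (x : ℝ) : ℝ := (μ (Set.Iic x)).toReal

/-- The cumulative distribution function of the standard semicircle law. -/
noncomputable def semicircleCDF (x : ℝ) : ℝ :=
  (1 / Real.pi) * ∫ t in Set.Iic x,
    Set.indicator (Set.Icc (-2 : ℝ) 2) (fun s => Real.sqrt (4 - s ^ 2)) t

/-- The branch of `√(z²−4)` holomorphic on the upper half-plane with `√(z²−4) ∼ z`
as `z → ∞`, given by `√(z−2)·√(z+2)` with principal square roots. -/
noncomputable def sqrtBr (z : ℂ) : ℂ := (z - 2) ^ ((1 : ℂ) / 2) * (z + 2) ^ ((1 : ℂ) / 2)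

/-- The Cauchy transform of the semicircle law: `G_Φ(z) = (z − √(z²−4))/2`. -/
noncomputable def Gsc (z : ℂ) : ℂ := (z - sqrtBr z) / 2


lemma sqrt_half_props (w : ℂ) (hw : 0 < w.im) :
    0 < (w ^ ((1:ℂ)/2)).re ∧ 0 < (w ^ ((1:ℂ)/2)).im ∧ (w ^ ((1:ℂ)/2)) ^ 2 = w := by
  have hw0 : w ≠ 0 := by
    intro h; rw [h] at hw; simp at hw
  have harg0 : 0 < w.arg := by
    rcases lt_or_eq_of_le (Complex.arg_nonneg_iff.2 hw.le) with h | h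
    · exact h
    · exfalso
      have := Complex.arg_eq_zero_iff.1 h.symm
      exact hw.ne' this.2
  have hargpi : w.arg < Real.pi := Complex.arg_lt_pi_iff.2 (Or.inr hw.ne')
  have hdef : w ^ ((1:ℂ)/2) = Complex.exp (Complex.log w * (1/2)) :=
    Complex.cpow_def_of_ne_zero hw0 _
  have hre : ((Complex.log w) * (1/2 : ℂ)).re = Real.log ‖w‖ / 2 := by
    simp [Complex.mul_re, Complex.log_re]
    ring
  have him : ((Complex.log w) * (1/2 : ℂ)).im = w.arg / 2 := by
    simp [Complex.mul_im, Complex.log_im]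
    ring
  have hcos : 0 < Real.cos (w.arg / 2) :=
    Real.cos_pos_of_mem_Ioo ⟨by nlinarith [Real.pi_pos], by nlinarith⟩
  have hsin : 0 < Real.sin (w.arg / 2) :=
    Real.sin_pos_of_pos_of_lt_pi (by linarith) (by nlinarith [Real.pi_pos])
  refine ⟨?_, ?_, ?_⟩
  · rw [hdef, Complex.exp_re, hre, him]
    positivity
  · rw [hdef, Complex.exp_im, hre, him]
    positivity
  · have := Complex.cpow_nat_inv_pow w (two_ne_zero)
    rw [show (((2:ℕ):ℂ))⁻¹ = (1:ℂ)/2 by norm_num] at this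
    exact_mod_cast this

/-- Estimates for the Cauchy transform `G_Φ(z) = (z − √(z²−4))/2` of the semicircle law:
(1) `|G_Φ(z)| ≤ 1` on the upper half-plane; (2) `|z − 2G_Φ(z)| ≥ 2√(Im z)` for `0 < Im z < 2`. -/
theorem Gsc_estimates :
    (∀ z : ℂ, 0 < z.im → ‖Gsc z‖ ≤ 1) ∧
    (∀ z : ℂ, 0 < z.im → z.im < 2 →
      2 * Real.sqrt z.im ≤ ‖z - 2 * Gsc z‖) := by
  have key : ∀ z : ℂ, 0 < z.im →
      ‖z - sqrtBr z‖ ≤ 2 ∧ (‖sqrtBr z‖)^2 = ‖(z-2)*(z+2)‖ := by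
    intro z hz
    obtain ⟨hp, hq, ha⟩ := sqrt_half_props (z - 2) (by simpa using hz)
    obtain ⟨hr, ht, hb⟩ := sqrt_half_props (z + 2) (by simpa using hz)
    set a := (z - 2) ^ ((1:ℂ)/2) with hadef
    set b := (z + 2) ^ ((1:ℂ)/2) with hbdef
    have hs : sqrtBr z = a * b := rfl
    constructor
    · -- |z - s| ≤ 2
      set s := a * b with hsdef
      have hs2 : s ^ 2 = (z - 2) * (z + 2) := by rw [hsdef, mul_pow, ha, hb]
      have hprod : (z - s) * (z + s) = 4 := by
        have h4 : (z - s) * (z + s) = z ^ 2 - s ^ 2 := by ring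
        rw [h4, hs2]; ring
      -- component equations
      have h1 : z.re - 2 = a.re^2 - a.im^2 := by
        have := congrArg Complex.re ha
        simp [pow_two, Complex.mul_re] at this ⊢
        linarith [this]
      have h2 : z.im = 2 * (a.re * a.im) := by
        have := congrArg Complex.im ha
        simp [pow_two, Complex.mul_im] at this
        linarith [this]
      have h3 : z.re + 2 = b.re^2 - b.im^2 := by
        have := congrArg Complex.re hb
        simp [pow_two, Complex.mul_re] at this ⊢
        linarith [this]
      have h4 : z.im = 2 * (b.re * b.im) := by
        have := congrArg Complex.im hb
        simp [pow_two, Complex.mul_im] at this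
        linarith [this]
      have hsre : s.re = a.re * b.re - a.im * b.im := by rw [hsdef]; simp [Complex.mul_re]
      have hsim : s.im = a.re * b.im + a.im * b.re := by rw [hsdef]; simp [Complex.mul_im]
      have hR : 0 ≤ z.re * s.re + z.im * s.im := by
        have hRe2 : 2 * z.re = a.re^2 - a.im^2 + b.re^2 - b.im^2 := by linarith
        have hpq : a.re * a.im = b.re * b.im := by linarith
        have hiden : 2 * (z.re * s.re + z.im * s.im)
            = (a.re^2 + a.im^2 + b.re^2 + b.im^2) * (a.re * b.re + a.im * b.im) := by
          rw [hsre, hsim]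
          linear_combination (a.re * b.re - a.im * b.im) * hRe2
            + (2 * (a.re * b.im + a.im * b.re)) * h2
            + (2 * (a.re * b.im + a.im * b.re)) * hpq
        nlinarith [mul_pos hp hr, mul_pos hq ht, sq_nonneg a.re, sq_nonneg a.im,
          sq_nonneg b.re, sq_nonneg b.im]
      have hnormle : ‖z - s‖ ≤ ‖z + s‖ := by
        have h5 : Complex.normSq (z - s) ≤ Complex.normSq (z + s) := by
          simp only [Complex.normSq_apply, Complex.sub_re, Complex.sub_im,
            Complex.add_re, Complex.add_im]
          nlinarith [hR]
        simpa [Complex.norm_def] using Real.sqrt_le_sqrt h5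
      have habs4 : ‖z - s‖ * ‖z + s‖ = 4 := by
        rw [← norm_mul, hprod]
        simp
      rw [hs]
      nlinarith [norm_nonneg (z - s), norm_nonneg (z + s)]
    · rw [hs, norm_mul, mul_pow, ← norm_pow, ← norm_pow, ha, hb, norm_mul]
  constructor
  · intro z hz
    have h := (key z hz).1
    have : ‖Gsc z‖ = ‖z - sqrtBr z‖ / 2 := by
      rw [Gsc, norm_div]
      norm_num
    rw [this]
    linarith
  · intro z hz hz2
    have h := (key z hz).2
    have heq : z - 2 * Gsc z = sqrtBr z := by rw [Gsc]; ring
    rw [heq]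
    have habs : ((z-2)*(z+2)).re = z.re^2 - z.im^2 - 4 ∧ ((z-2)*(z+2)).im = 2*(z.re*z.im) := by
      constructor <;> · simp [Complex.mul_re, Complex.mul_im] <;> ring
    have hns : (16:ℝ) * z.im^2 ≤ Complex.normSq ((z-2)*(z+2)) := by
      rw [Complex.normSq_apply, habs.1, habs.2]
      nlinarith [sq_nonneg (z.re^2 + z.im^2 - 4)]
    have h4v : 4 * z.im ≤ ‖(z-2)*(z+2)‖ := by
      rw [Complex.norm_def]
      rw [show (16:ℝ) * z.im^2 = (4*z.im)^2 by ring] at hns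
      nlinarith [Real.sq_sqrt (Complex.normSq_nonneg ((z-2)*(z+2))),
        Real.sqrt_nonneg (Complex.normSq ((z-2)*(z+2)))]
    have hsq : (2 * Real.sqrt z.im)^2 ≤ (‖sqrtBr z‖)^2 := by
      rw [h]
      have : (2 * Real.sqrt z.im)^2 = 4 * z.im := by
        rw [mul_pow, Real.sq_sqrt hz.le]; ring
      linarith
    nlinarith [norm_nonneg (sqrtBr z), Real.sqrt_nonneg z.im,
      mul_nonneg (by norm_num : (0:ℝ) ≤ 2) (Real.sqrt_nonneg z.im)]
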